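/- Let n ≥ 1 and let a : Fin n → ℂ satisfy Re(a(i) − a(j)) > 0 whenever i < j (in particular a is injective). Declare two pairs (i,j) and (i′,j′) with i < j and i′ < j′ equivalent if a(i) − a(j) is a positive real multiple of a(i′) − a(j′), and let R₁, …, R_l be the resulting equivalence classes of pairs. For each t, let Sto_t be the set of matrices g ∈ M_n(ℂ) with g_kk = 1 for all k and g_ij = 0 for all i ≠ j with (i,j) ∉ R_t. Then for any enumeration d₁, …, d_l of the classes, the multiplication map Sto_{d₁} × Sto_{d₂} × ⋯ × Sto_{d_l} → U₊, (K₁, …, K_l) ↦ K₁K₂⋯K_l, is a bijection onto the group U₊ of upper-triangular matrices with all diagonal entries equal to 1. -/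

import Mathlib

open Matrix

namespace StokesAux

variable {n : ℕ}

/-- Upper unitriangular predicate. -/
def UT (M : Matrix (Fin n) (Fin n) ℂ) : Prop :=
  (∀ i, M i i = 1) ∧ ∀ i j : Fin n, j < i → M i j = 0

lemma UT_one : UT (1 : Matrix (Fin n) (Fin n) ℂ) := by
  constructor
  · intro i; simp
  · intro i j hij; exact Matrix.one_apply_ne (ne_of_gt hij)

lemma UT_mul {A B : Matrix (Fin n) (Fin n) ℂ} (hA : UT A) (hB : UT B) : UT (A * B) := by
  constructor
  · intro i
    rw [Matrix.mul_apply, Finset.sum_eq_single i]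
    · rw [hA.1, hB.1, one_mul]
    · intro k _ hk
      rcases lt_or_gt_of_ne hk with h | h
      · rw [hA.2 _ _ h, zero_mul]
      · rw [hB.2 _ _ h, mul_zero]
    · intro h; exact absurd (Finset.mem_univ i) h
  · intro i j hij
    rw [Matrix.mul_apply, Finset.sum_eq_zero]
    intro k _
    rcases lt_or_ge k i with h | h
    · rw [hA.2 _ _ h, zero_mul]
    · rw [hB.2 _ _ (lt_of_lt_of_le hij h), mul_zero]

lemma UT_prod {L : List (Matrix (Fin n) (Fin n) ℂ)} (h : ∀ M ∈ L, UT M) : UT L.prod := by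
  induction L with
  | nil => simpa using UT_one
  | cons A T ih =>
    rw [List.prod_cons]
    exact UT_mul (h A (List.mem_cons_self)) (ih fun M hM => h M (List.mem_cons_of_mem A hM))

/-- Key lemma: if two families of unitriangular matrices agree on all entries of
gap `< (j:ℕ) - i`, then the products differ at `(i,j)` by the sum of entry differences. -/
lemma key {l : ℕ} (K K' : Fin l → Matrix (Fin n) (Fin n) ℂ)
    (hK : ∀ t, UT (K t)) (hK' : ∀ t, UT (K' t))
    (i j : Fin n) (hij : i < j)
    (h : ∀ t (i' j' : Fin n), (j' : ℕ) - (i' : ℕ) < (j : ℕ) - (i : ℕ) → K t i' j' = K' t i' j') :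
    (List.ofFn K).prod i j - (List.ofFn K').prod i j = ∑ t, (K t i j - K' t i j) := by
  induction l generalizing i j with
  | zero => simp
  | succ l ih =>
    rw [List.ofFn_succ, List.ofFn_succ, List.prod_cons, List.prod_cons]
    set P1 := (List.ofFn fun t : Fin l => K t.succ).prod with hP1
    set P2 := (List.ofFn fun t : Fin l => K' t.succ).prod with hP2
    have hUP1 : UT P1 := UT_prod (by simp only [List.mem_ofFn]; rintro M ⟨t, rfl⟩; exact hK t.succ)
    have hUP2 : UT P2 := UT_prod (by simp only [List.mem_ofFn]; rintro M ⟨t, rfl⟩; exact hK' t.succ)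
    rw [Matrix.mul_apply, Matrix.mul_apply, ← Finset.sum_sub_distrib]
    have hzero : ∀ k ∈ Finset.univ, k ∉ ({i, j} : Finset (Fin n)) →
        K 0 i k * P1 k j - K' 0 i k * P2 k j = 0 := by
      intro k _ hk
      simp only [Finset.mem_insert, Finset.mem_singleton, not_or] at hk
      rcases lt_or_ge k i with h1 | h1
      · rw [(hK 0).2 _ _ h1, (hK' 0).2 _ _ h1, zero_mul, zero_mul, sub_self]
      rcases lt_or_ge j k with h2 | h2
      · rw [hUP1.2 _ _ h2, hUP2.2 _ _ h2, mul_zero, mul_zero, sub_self]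
      have hik : i < k := lt_of_le_of_ne h1 (Ne.symm hk.1)
      have hkj : k < j := lt_of_le_of_ne h2 hk.2
      have e1 : K 0 i k = K' 0 i k := by
        apply h
        omega
      have e2 : P1 k j = P2 k j := by
        have := ih (fun t => K t.succ) (fun t => K' t.succ) (fun t => hK t.succ)
          (fun t => hK' t.succ) k j hkj (fun t i' j' hg => h t.succ i' j' (by omega))
        have e3 : ∀ t : Fin l, K t.succ k j = K' t.succ k j := fun t => h t.succ k j (by omega)
        simp only [e3, sub_self, Finset.sum_const_zero] at this
        exact sub_eq_zero.mp this
      rw [e1, e2, sub_self]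
    rw [← Finset.sum_subset (Finset.subset_univ ({i, j} : Finset (Fin n)))
      (fun k _ hk => hzero k (Finset.mem_univ k) hk)]
    rw [Finset.sum_pair (ne_of_lt hij)]
    have hii : K 0 i i = 1 := (hK 0).1 i
    have hii' : K' 0 i i = 1 := (hK' 0).1 i
    have hjj : P1 j j = 1 := hUP1.1 j
    have hjj' : P2 j j = 1 := hUP2.1 j
    rw [hii, hii', hjj, hjj', one_mul, one_mul, mul_one, mul_one]
    have hIH := ih (fun t => K t.succ) (fun t => K' t.succ) (fun t => hK t.succ)
      (fun t => hK' t.succ) i j hij (fun t i' j' hg => h t.succ i' j' hg)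
    rw [Fin.sum_univ_succ]
    rw [sub_add_sub_comm] at *
    linear_combination hIH


open Classical in
/-- Recursively solve for the entries of the Stokes factors. -/
noncomputable def solveN (n l : ℕ) (u : Matrix (Fin n) (Fin n) ℂ)
    (D : Fin l → Set (Fin n × Fin n)) : Fin n → Fin n → ℂ
  | i, j =>
    u i j - (List.ofFn (fun t : Fin l =>
      (1 : Matrix (Fin n) (Fin n) ℂ) + Matrix.of (fun i' j' : Fin n =>
        if h : (i', j') ∈ D t ∧ (j' : ℕ) - (i' : ℕ) < (j : ℕ) - (i : ℕ)
        then solveN n l u D i' j' else 0))).prod i j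
  termination_by i j => (j : ℕ) - (i : ℕ)
  decreasing_by exact h.2

open Classical in
lemma solveN_eq (n l : ℕ) (u : Matrix (Fin n) (Fin n) ℂ) (D : Fin l → Set (Fin n × Fin n))
    (i j : Fin n) :
    solveN n l u D i j = u i j - (List.ofFn (fun t : Fin l =>
      (1 : Matrix (Fin n) (Fin n) ℂ) + Matrix.of (fun i' j' : Fin n =>
        if (i', j') ∈ D t ∧ (j' : ℕ) - (i' : ℕ) < (j : ℕ) - (i : ℕ)
        then solveN n l u D i' j' else 0))).prod i j := by
  rw [solveN]
  simp only [dite_eq_ite]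


lemma class_subset (a : Fin n → ℂ) (q q' : Fin n × Fin n) (c : ℝ) (hc : 0 < c)
    (h : a q.1 - a q.2 = (c : ℂ) * (a q'.1 - a q'.2)) :
    {z : Fin n × Fin n | z.1 < z.2 ∧ ∃ r : ℝ, 0 < r ∧ a z.1 - a z.2 = (r : ℂ) * (a q.1 - a q.2)} ⊆
    {z : Fin n × Fin n | z.1 < z.2 ∧ ∃ r : ℝ, 0 < r ∧ a z.1 - a z.2 = (r : ℂ) * (a q'.1 - a q'.2)} := by
  rintro z ⟨hz, r, hr, hrel⟩
  refine ⟨hz, r * c, mul_pos hr hc, ?_⟩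
  rw [hrel, h]; push_cast; ring

end StokesAux


open StokesAux

/-- **Stokes factorisation** ([bafi, Lemma 2.4] for `GL_n(ℂ)`): if the singular directions
determined by a regular element `A₀ = diag(a)` all lie in the right half-plane, then for any
enumeration `D : Fin l → Set (Fin n × Fin n)` of the equivalence classes of pairs `(i,j)`,
`i < j` (two pairs being equivalent when the corresponding differences `a i − a j` are
positive real multiples of each other), the ordered product map from the product of the
Stokes groups is a bijection onto the group `U₊` of upper-triangular unipotent matrices. -/
theorem stokes_factorisation (n l : ℕ) (hn : 1 ≤ n) (a : Fin n → ℂ)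
    (ha : ∀ i j : Fin n, i < j → 0 < (a i - a j).re)
    (D : Fin l → Set (Fin n × Fin n))
    (hclass : ∀ t : Fin l, ∃ p : Fin n × Fin n, p.1 < p.2 ∧
      D t = {q : Fin n × Fin n | q.1 < q.2 ∧
        ∃ r : ℝ, 0 < r ∧ a q.1 - a q.2 = (r : ℂ) * (a p.1 - a p.2)})
    (hinj : Function.Injective D)
    (hcover : (⋃ t : Fin l, D t) = {p : Fin n × Fin n | p.1 < p.2}) :
    Set.BijOn
      (fun K : Fin l → Matrix (Fin n) (Fin n) ℂ => (List.ofFn K).prod)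
      {K : Fin l → Matrix (Fin n) (Fin n) ℂ |
        ∀ t : Fin l, (∀ i, K t i i = 1) ∧
          ∀ i j : Fin n, i ≠ j → (i, j) ∉ D t → K t i j = 0}
      {u : Matrix (Fin n) (Fin n) ℂ |
        (∀ i, u i i = 1) ∧ ∀ i j : Fin n, j < i → u i j = 0} := by

  classical
  -- each class consists of upper pairs
  have hDsub : ∀ t : Fin l, ∀ p ∈ D t, p.1 < p.2 := by
    intro t p hp
    obtain ⟨q, hq, hDt⟩ := hclass t
    rw [hDt] at hp; exact hp.1
  -- the classes are pairwise disjoint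
  have hdisj : ∀ t s : Fin l, ∀ p : Fin n × Fin n, p ∈ D t → p ∈ D s → t = s := by
    intro t s p hpt hps
    apply hinj
    obtain ⟨q, hq, hDt⟩ := hclass t
    obtain ⟨q', hq', hDs⟩ := hclass s
    rw [hDt] at hpt; rw [hDs] at hps
    obtain ⟨hp1, r, hr, hrel⟩ := hpt
    obtain ⟨-, r', hr', hrel'⟩ := hps
    have h2 : (r : ℂ) * (a q.1 - a q.2) = (r' : ℂ) * (a q'.1 - a q'.2) := by
      rw [← hrel, ← hrel']
    have hr0 : (r : ℂ) ≠ 0 := by exact_mod_cast hr.ne'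
    have hr0' : (r' : ℂ) ≠ 0 := by exact_mod_cast hr'.ne'
    have hmul : a q.1 - a q.2 = ((r' / r : ℝ) : ℂ) * (a q'.1 - a q'.2) := by
      push_cast
      field_simp
      linear_combination h2
    have hmul' : a q'.1 - a q'.2 = ((r / r' : ℝ) : ℂ) * (a q.1 - a q.2) := by
      push_cast
      field_simp
      linear_combination h2.symm
    rw [hDt, hDs]
    exact Set.Subset.antisymm
      (class_subset a q q' (r' / r) (div_pos hr' hr) hmul)
      (class_subset a q' q (r / r') (div_pos hr hr') hmul')
  -- membership in the domain implies unitriangularity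
  have hUTof : ∀ K : Fin l → Matrix (Fin n) (Fin n) ℂ,
      (∀ t : Fin l, (∀ i, K t i i = 1) ∧
        ∀ i j : Fin n, i ≠ j → (i, j) ∉ D t → K t i j = 0) → ∀ t, UT (K t) := by
    intro K hK t
    refine ⟨(hK t).1, fun i j hji => (hK t).2 i j (ne_of_gt hji) ?_⟩
    intro hmem
    exact absurd (hDsub t _ hmem) (by simp; omega)
  have hUTprodof : ∀ K : Fin l → Matrix (Fin n) (Fin n) ℂ,
      (∀ t, UT (K t)) → UT (List.ofFn K).prod := by
    intro K hK
    exact UT_prod (by simp only [List.mem_ofFn]; rintro M ⟨t, rfl⟩; exact hK t)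
  refine ⟨?_, ?_, ?_⟩
  · -- MapsTo
    intro K hK
    exact hUTprodof K (hUTof K hK)
  · -- InjOn
    intro K hK K' hK' heq
    have hUT := hUTof K hK
    have hUT' := hUTof K' hK'
    simp only at heq
    have claim : ∀ g : ℕ, ∀ (t : Fin l) (i j : Fin n), (j : ℕ) - (i : ℕ) = g →
        K t i j = K' t i j := by
      intro g
      induction g using Nat.strong_induction_on with
      | _ g IH =>
        intro t i j hg
        by_cases hij : i < j
        · have hkey := key K K' hUT hUT' i j hij
            (fun s i' j' hlt => IH _ (by omega) s i' j' rfl)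
          rw [heq, sub_self] at hkey
          by_cases hmem : (i, j) ∈ D t
          · have hsum : ∑ s : Fin l, (K s i j - K' s i j) = K t i j - K' t i j := by
              apply Finset.sum_eq_single t
              · intro s _ hst
                have hnot : (i, j) ∉ D s := fun hm => hst (hdisj s t _ hm hmem)
                rw [(hK s).2 i j (ne_of_lt hij) hnot, (hK' s).2 i j (ne_of_lt hij) hnot,
                  sub_self]
              · intro h; exact absurd (Finset.mem_univ t) h
            rw [hsum] at hkey
            exact sub_eq_zero.mp hkey.symm
          · rw [(hK t).2 i j (ne_of_lt hij) hmem, (hK' t).2 i j (ne_of_lt hij) hmem]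
        · rcases eq_or_lt_of_le (not_lt.mp hij) with hj | hj
          · have : j = i := hj ▸ rfl
            subst this
            rw [(hK t).1, (hK' t).1]
          · have hne : i ≠ j := ne_of_gt hj
            have hnot : (i, j) ∉ D t := fun hm => absurd (hDsub t _ hm) (by simp; omega)
            rw [(hK t).2 i j hne hnot, (hK' t).2 i j hne hnot]
    funext t
    exact Matrix.ext fun i j => claim _ t i j rfl
  · -- SurjOn
    intro u hu
    set N : Fin n → Fin n → ℂ := solveN n l u D with hN
    set Kfam : Fin l → Matrix (Fin n) (Fin n) ℂ := fun t =>
      (1 : Matrix (Fin n) (Fin n) ℂ) + Matrix.of (fun i j : Fin n =>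
        if (i, j) ∈ D t then N i j else 0) with hKfam
    have hKmem : ∀ t : Fin l, (∀ i, Kfam t i i = 1) ∧
        ∀ i j : Fin n, i ≠ j → (i, j) ∉ D t → Kfam t i j = 0 := by
      intro t
      constructor
      · intro i
        have hnot : (i, i) ∉ D t := fun hm => absurd (hDsub t _ hm) (lt_irrefl i)
        simp [hKfam, Matrix.add_apply, Matrix.one_apply_eq, hnot]
      · intro i j hne hnot
        simp [hKfam, Matrix.add_apply, Matrix.one_apply_ne hne, hnot]
    have hUTK : ∀ t, UT (Kfam t) := hUTof Kfam hKmem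
    refine ⟨Kfam, hKmem, ?_⟩
    apply Matrix.ext
    intro i j
    show (List.ofFn Kfam).prod i j = u i j
    rcases lt_trichotomy i j with hij | hij | hij
    · -- main case
      set Kt : Fin l → Matrix (Fin n) (Fin n) ℂ := fun t =>
        (1 : Matrix (Fin n) (Fin n) ℂ) + Matrix.of (fun i' j' : Fin n =>
          if (i', j') ∈ D t ∧ (j' : ℕ) - (i' : ℕ) < (j : ℕ) - (i : ℕ)
          then solveN n l u D i' j' else 0) with hKt
      have hUTKt : ∀ t, UT (Kt t) := by
        intro t
        constructor
        · intro i'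
          have hnot : (i', i') ∉ D t := fun hm => absurd (hDsub t _ hm) (lt_irrefl i')
          simp [hKt, Matrix.add_apply, Matrix.one_apply_eq, hnot]
        · intro i' j' hji
          have hnot : (i', j') ∉ D t := fun hm =>
            absurd (hDsub t _ hm) (by simp; omega)
          simp [hKt, Matrix.add_apply, Matrix.one_apply_ne (ne_of_gt hji), hnot]
      have hagree : ∀ (t : Fin l) (i' j' : Fin n),
          (j' : ℕ) - (i' : ℕ) < (j : ℕ) - (i : ℕ) → Kfam t i' j' = Kt t i' j' := by
        intro t i' j' hlt
        simp only [hKfam, hKt, Matrix.add_apply, Matrix.of_apply]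
        congr 1
        by_cases hmem : (i', j') ∈ D t
        · rw [if_pos hmem, if_pos ⟨hmem, hlt⟩, hN]
        · rw [if_neg hmem, if_neg (fun h => hmem h.1)]
      have hkey := key Kfam Kt hUTK hUTKt i j hij hagree
      -- compute the sum
      have hmem0 : (i, j) ∈ ⋃ t : Fin l, D t := by
        rw [hcover]; exact hij
      obtain ⟨t0, ht0⟩ := Set.mem_iUnion.mp hmem0
      have hKtij : ∀ t, Kt t i j = 0 := by
        intro t
        simp only [hKt, Matrix.add_apply, Matrix.of_apply,
          Matrix.one_apply_ne (ne_of_lt hij)]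
        rw [if_neg (fun h => absurd h.2 (lt_irrefl _)), add_zero]
      have hKfamij : ∀ t, Kfam t i j = if (i, j) ∈ D t then N i j else 0 := by
        intro t
        simp only [hKfam, Matrix.add_apply, Matrix.of_apply,
          Matrix.one_apply_ne (ne_of_lt hij), zero_add]
      have hsum : ∑ t : Fin l, (Kfam t i j - Kt t i j) = N i j := by
        rw [Finset.sum_congr rfl (fun t _ => by rw [hKtij t, hKfamij t, sub_zero])]
        rw [Finset.sum_eq_single t0]
        · rw [if_pos ht0]
        · intro s _ hst
          rw [if_neg (fun hm => hst (hdisj s t0 _ hm ht0))]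
        · intro h; exact absurd (Finset.mem_univ t0) h
      rw [hsum] at hkey
      have hsolve : N i j = u i j - (List.ofFn Kt).prod i j := by
        rw [hN, solveN_eq]
      rw [hsolve] at hkey
      have := hUTprodof Kfam hUTK
      linear_combination hkey
    · subst hij
      rw [(hUTprodof Kfam hUTK).1, hu.1]
    · rw [(hUTprodof Kfam hUTK).2 i j hij, hu.2 i j hij]
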